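/- arXiv:2311.15461 — 2 statements merged into one kernel-verified Lean document; each statement's English description precedes it below -/
import Mathlib

section
/- Let K0 ∈ ℝ, δ > 0, let G : [K0, K0 + δ] → ℝ be continuous, let c ∈ ℝ and ε > 0, and let K : {z ∈ ℂ : 0 < |z| < ε} → (K0, K0 + δ) be a function satisfying ln(K(z) - K0) + G(K(z)) = ln(|z|^2) + c for all z with 0 < |z| < ε. Then K(z) → K0 as z → 0, and (K(z) - K0)/|z|^2 → exp(c - G(K0)) as z → 0; in particular this limit is a strictly positive real number. -/
open Filter Topology

/-- If `K` on a punctured disk takes values in `(K0, K0 + δ)` and satisfies the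
implicit equation `ln(K(z) - K0) + G(K(z)) = ln|z|² + c` with `G` continuous on
`[K0, K0 + δ]`, then `K(z) → K0` and `(K(z) - K0)/|z|² → exp(c - G(K0)) > 0`
as `z → 0`. -/
theorem exceptional_germ_fifth_invariant_exists (K0 δ : ℝ) (hδ : 0 < δ)
    (G : ℝ → ℝ) (hG : ContinuousOn G (Set.Icc K0 (K0 + δ)))
    (c : ℝ) (ε : ℝ) (hε : 0 < ε) (K : ℂ → ℝ)
    (hmem : ∀ z : ℂ, 0 < ‖z‖ → ‖z‖ < ε →
      K z ∈ Set.Ioo K0 (K0 + δ))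
    (heq : ∀ z : ℂ, 0 < ‖z‖ → ‖z‖ < ε →
      Real.log (K z - K0) + G (K z) = Real.log (‖z‖ ^ 2) + c) :
    Tendsto K (𝓝[≠] (0 : ℂ)) (𝓝 K0) ∧
      Tendsto (fun z : ℂ => (K z - K0) / ‖z‖ ^ 2) (𝓝[≠] (0 : ℂ))
        (𝓝 (Real.exp (c - G K0))) ∧
      0 < Real.exp (c - G K0) := by
  have hK0mem : K0 ∈ Set.Icc K0 (K0 + δ) := ⟨le_refl _, by linarith⟩
  -- ratio identity
  have hratio : ∀ z : ℂ, 0 < ‖z‖ → ‖z‖ < ε →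
      K z - K0 = ‖z‖ ^ 2 * Real.exp (c - G (K z)) := by
    intro z h1 h2
    have hpos : 0 < K z - K0 := sub_pos.2 (hmem z h1 h2).1
    have hz2 : 0 < ‖z‖ ^ 2 := by positivity
    have he := heq z h1 h2
    have hlog : Real.log (K z - K0)
        = Real.log (‖z‖ ^ 2) + (c - G (K z)) := by linarith
    calc K z - K0 = Real.exp (Real.log (K z - K0)) := (Real.exp_log hpos).symm
      _ = Real.exp (Real.log (‖z‖ ^ 2) + (c - G (K z))) := by rw [hlog]
      _ = ‖z‖ ^ 2 * Real.exp (c - G (K z)) := by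
          rw [Real.exp_add, Real.exp_log hz2]
  -- bound on G from compactness
  obtain ⟨m, hM⟩ : ∃ m, ∀ x ∈ Set.Icc K0 (K0 + δ), m ≤ G x := by
    obtain ⟨m, hm⟩ := (isCompact_Icc.bddBelow_image hG).imp (fun m h => h)
    exact ⟨m, fun x hx => hm (Set.mem_image_of_mem G hx)⟩
  -- eventual hypotheses
  have hev : ∀ᶠ z : ℂ in 𝓝[≠] 0, 0 < ‖z‖ ∧ ‖z‖ < ε := by
    have h2 : ∀ᶠ z : ℂ in 𝓝 0, ‖z‖ < ε := by
      filter_upwards [Metric.ball_mem_nhds (0 : ℂ) hε] with z hz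
      simpa [Complex.dist_eq] using hz
    filter_upwards [h2.filter_mono nhdsWithin_le_nhds, self_mem_nhdsWithin]
      with z h2 h1
    exact ⟨by simpa using h1, h2⟩
  -- first limit
  have htend0 : Tendsto (fun z : ℂ => K z - K0) (𝓝[≠] 0) (𝓝 0) := by
    have hbound : ∀ᶠ z : ℂ in 𝓝[≠] 0,
        ‖K z - K0‖ ≤ Real.exp (c - m) * ‖z‖ ^ 2 := by
      filter_upwards [hev] with z hz
      have hpos : 0 < K z - K0 := sub_pos.2 (hmem z hz.1 hz.2).1
      have hKIcc : K z ∈ Set.Icc K0 (K0 + δ) :=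
        Set.Ioo_subset_Icc_self (hmem z hz.1 hz.2)
      rw [Real.norm_eq_abs, abs_of_pos hpos, hratio z hz.1 hz.2]
      have : Real.exp (c - G (K z)) ≤ Real.exp (c - m) :=
        Real.exp_le_exp.2 (by have := hM (K z) hKIcc; linarith)
      have hz2 : (0:ℝ) ≤ ‖z‖ ^ 2 := by positivity
      nlinarith
    have hlim : Tendsto (fun z : ℂ => Real.exp (c - m) * ‖z‖ ^ 2)
        (𝓝[≠] 0) (𝓝 0) := by
      have : Tendsto (fun z : ℂ => Real.exp (c - m) * ‖z‖ ^ 2)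
          (𝓝 0) (𝓝 (Real.exp (c - m) * ‖(0:ℂ)‖ ^ 2)) := by
        exact (tendsto_const_nhds.mul ((continuous_norm.tendsto (0:ℂ)).pow 2))
      simpa using this.mono_left nhdsWithin_le_nhds
    exact squeeze_zero_norm' hbound hlim
  have hK : Tendsto K (𝓝[≠] (0 : ℂ)) (𝓝 K0) := by
    have := htend0.add_const K0
    simpa using this
  refine ⟨hK, ?_, Real.exp_pos _⟩
  -- second limit
  have hKin : Tendsto K (𝓝[≠] (0 : ℂ)) (𝓝[Set.Icc K0 (K0 + δ)] K0) := by
    rw [tendsto_nhdsWithin_iff]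
    refine ⟨hK, ?_⟩
    filter_upwards [hev] with z hz
    exact Set.Ioo_subset_Icc_self (hmem z hz.1 hz.2)
  have hGK : Tendsto (fun z : ℂ => G (K z)) (𝓝[≠] 0) (𝓝 (G K0)) :=
    (hG K0 hK0mem).tendsto.comp hKin
  have hexp : Tendsto (fun z : ℂ => Real.exp (c - G (K z))) (𝓝[≠] 0)
      (𝓝 (Real.exp (c - G K0))) :=
    (Real.continuous_exp.tendsto _).comp (tendsto_const_nhds.sub hGK)
  refine hexp.congr' ?_
  filter_upwards [hev] with z hz
  have hz2 : ‖z‖ ^ 2 ≠ 0 := pow_ne_zero 2 (ne_of_gt hz.1)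
  rw [hratio z hz.1 hz.2, mul_comm, mul_div_assoc, div_self hz2, mul_one]
end

section
/- Let K0 ∈ ℝ, δ > 0, let G : [K0, K0 + δ] → ℝ be continuous and such that the function t ↦ ln(t - K0) + G(t) is strictly monotone increasing on (K0, K0 + δ). Let c1, c2 ∈ ℝ, ε > 0, and let K1, K2 : {z ∈ ℂ : 0 < |z| < ε} → (K0, K0 + δ) satisfy ln(Ki(z) - K0) + G(Ki(z)) = ln(|z|^2) + ci for all 0 < |z| < ε and i = 1, 2. If lim_{z→0} (K1(z) - K0)/|z|^2 = lim_{z→0} (K2(z) - K0)/|z|^2, then c1 = c2 and K1(z) = K2(z) for all z with 0 < |z| < ε. -/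
open Filter Topology

/-- The fifth invariant determines the exceptional germ uniquely: if `K1, K2` on a
punctured disk satisfy `ln(Ki(z) - K0) + G(Ki(z)) = ln|z|² + ci` with
`t ↦ ln(t - K0) + G(t)` strictly increasing on `(K0, K0 + δ)`, and the limits
`lim_{z→0} (Ki(z) - K0)/|z|²` exist and coincide, then `c1 = c2` and `K1 = K2`. -/
theorem fifth_invariant_determines_germ (K0 δ : ℝ) (hδ : 0 < δ)
    (G : ℝ → ℝ) (hG : ContinuousOn G (Set.Icc K0 (K0 + δ)))
    (hmono : StrictMonoOn (fun t : ℝ => Real.log (t - K0) + G t)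
      (Set.Ioo K0 (K0 + δ)))
    (c₁ c₂ : ℝ) (ε : ℝ) (hε : 0 < ε) (K₁ K₂ : ℂ → ℝ)
    (hmem₁ : ∀ z : ℂ, 0 < ‖z‖ → ‖z‖ < ε →
      K₁ z ∈ Set.Ioo K0 (K0 + δ))
    (hmem₂ : ∀ z : ℂ, 0 < ‖z‖ → ‖z‖ < ε →
      K₂ z ∈ Set.Ioo K0 (K0 + δ))
    (heq₁ : ∀ z : ℂ, 0 < ‖z‖ → ‖z‖ < ε →
      Real.log (K₁ z - K0) + G (K₁ z) = Real.log (‖z‖ ^ 2) + c₁)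
    (heq₂ : ∀ z : ℂ, 0 < ‖z‖ → ‖z‖ < ε →
      Real.log (K₂ z - K0) + G (K₂ z) = Real.log (‖z‖ ^ 2) + c₂)
    (l : ℝ)
    (hlim₁ : Tendsto (fun z : ℂ => (K₁ z - K0) / ‖z‖ ^ 2)
      (𝓝[≠] (0 : ℂ)) (𝓝 l))
    (hlim₂ : Tendsto (fun z : ℂ => (K₂ z - K0) / ‖z‖ ^ 2)
      (𝓝[≠] (0 : ℂ)) (𝓝 l)) :
    c₁ = c₂ ∧
      ∀ z : ℂ, 0 < ‖z‖ → ‖z‖ < ε → K₁ z = K₂ z := by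
  -- eventually in the punctured disk
  have hev : ∀ᶠ z : ℂ in 𝓝[≠] 0, 0 < ‖z‖ ∧ ‖z‖ < ε := by
    have h1 : ∀ᶠ z : ℂ in 𝓝 (0 : ℂ), ‖z‖ < ε := by
      filter_upwards [Metric.ball_mem_nhds (0 : ℂ) hε] with z hz
      simpa [Complex.dist_eq] using hz
    filter_upwards [h1.filter_mono nhdsWithin_le_nhds, self_mem_nhdsWithin] with z h1 h2
    exact ⟨norm_pos_iff.mpr h2, h1⟩
  have habs2 : Tendsto (fun z : ℂ => ‖z‖ ^ 2) (𝓝[≠] (0 : ℂ)) (𝓝 0) := by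
    have : Tendsto (fun z : ℂ => ‖z‖ ^ 2) (𝓝 (0 : ℂ)) (𝓝 0) := by
      simpa using (by fun_prop : Continuous fun z : ℂ => ‖z‖ ^ 2).tendsto (0 : ℂ)
    exact this.mono_left nhdsWithin_le_nhds
  have key : ∀ (c : ℝ) (K : ℂ → ℝ),
      (∀ z : ℂ, 0 < ‖z‖ → ‖z‖ < ε → K z ∈ Set.Ioo K0 (K0 + δ)) →
      (∀ z : ℂ, 0 < ‖z‖ → ‖z‖ < ε →
        Real.log (K z - K0) + G (K z) = Real.log (‖z‖ ^ 2) + c) →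
      Tendsto (fun z : ℂ => (K z - K0) / ‖z‖ ^ 2) (𝓝[≠] (0 : ℂ)) (𝓝 l) →
      l = Real.exp (c - G K0) := by
    intro c K hmem heq hlim
    -- the quotient equals exp (c - G (K z))
    have hquot : ∀ᶠ z : ℂ in 𝓝[≠] 0,
        (K z - K0) / ‖z‖ ^ 2 = Real.exp (c - G (K z)) := by
      filter_upwards [hev] with z hz
      obtain ⟨h0, hε'⟩ := hz
      have hm := hmem z h0 hε'
      have hpos : 0 < K z - K0 := by linarith [hm.1]
      have hzpos : 0 < ‖z‖ ^ 2 := by positivity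
      have h := heq z h0 hε'
      have : Real.log (K z - K0) - Real.log (‖z‖ ^ 2) = c - G (K z) := by
        linarith
      calc (K z - K0) / ‖z‖ ^ 2
          = Real.exp (Real.log (K z - K0) - Real.log (‖z‖ ^ 2)) := by
            rw [Real.exp_sub, Real.exp_log hpos, Real.exp_log hzpos]
        _ = Real.exp (c - G (K z)) := by rw [this]
    -- K z → K0
    have hK0 : Tendsto K (𝓝[≠] (0 : ℂ)) (𝓝 K0) := by
      have h1 : Tendsto (fun z : ℂ => (K z - K0) / ‖z‖ ^ 2 * ‖z‖ ^ 2)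
          (𝓝[≠] (0 : ℂ)) (𝓝 (l * 0)) := hlim.mul habs2
      rw [mul_zero] at h1
      have h2 : Tendsto (fun z : ℂ => K z - K0) (𝓝[≠] (0 : ℂ)) (𝓝 0) := by
        refine h1.congr' ?_
        filter_upwards [hev] with z hz
        have : ‖z‖ ^ 2 ≠ 0 := pow_ne_zero 2 hz.1.ne'
        field_simp [hz.1.ne']
      have := h2.add_const K0
      simpa using this
    -- G (K z) → G K0
    have hGK : Tendsto (fun z : ℂ => G (K z)) (𝓝[≠] (0 : ℂ)) (𝓝 (G K0)) := by
      have hK0mem : K0 ∈ Set.Icc K0 (K0 + δ) := ⟨le_refl _, by linarith⟩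
      have hc : ContinuousWithinAt G (Set.Icc K0 (K0 + δ)) K0 := hG K0 hK0mem
      refine hc.tendsto.comp (tendsto_nhdsWithin_iff.2 ⟨hK0, ?_⟩)
      filter_upwards [hev] with z hz
      have hm := hmem z hz.1 hz.2
      exact ⟨le_of_lt hm.1, le_of_lt hm.2⟩
    have hexp : Tendsto (fun z : ℂ => Real.exp (c - G (K z))) (𝓝[≠] (0 : ℂ))
        (𝓝 (Real.exp (c - G K0))) :=
      (Real.continuous_exp.tendsto _).comp (tendsto_const_nhds.sub hGK)
    exact tendsto_nhds_unique hlim (hexp.congr' (hquot.mono fun z h => h.symm))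
  have h1 := key c₁ K₁ hmem₁ heq₁ hlim₁
  have h2 := key c₂ K₂ hmem₂ heq₂ hlim₂
  have hc : c₁ = c₂ := by
    have : Real.exp (c₁ - G K0) = Real.exp (c₂ - G K0) := by rw [← h1, ← h2]
    have := Real.exp_injective this
    linarith
  refine ⟨hc, fun z h0 hε' => ?_⟩
  apply hmono.injOn (hmem₁ z h0 hε') (hmem₂ z h0 hε')
  simp only
  rw [heq₁ z h0 hε', heq₂ z h0 hε', hc]
end
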